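/- Let X be a Polish space with its Borel σ-algebra, μ a Borel probability measure on X, Y a standard Borel space, T : X → Y a measurable map, ν = T_*μ, and (κ_y)_{y∈Y} a disintegration of μ over T (i.e. a measurable family of Borel probability measures on X with μ(A) = ∫_Y κ_y(A) dν(y) for all measurable A and κ_y(T⁻¹{y}) = 1 for ν-a.e. y). Then for μ-almost every x ∈ X, the point x belongs to the topological support of the measure κ_{T(x)}. -/

import Mathlib

open MeasureTheory Filter Set

/-- The topological support of a Borel measure: the set of points all of whose open
neighborhoods have positive measure. This is the smallest closed set of full measure
(when the latter exists, e.g. on Polish spaces). -/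
def measureSupport {X : Type*} [TopologicalSpace X] [MeasurableSpace X]
    (ρ : Measure X) : Set X :=
  {x | ∀ U : Set X, IsOpen U → x ∈ U → 0 < ρ U}

theorem stmt6 {X Y : Type*} [TopologicalSpace X] [PolishSpace X]
    [MeasurableSpace X] [BorelSpace X]
    [MeasurableSpace Y] [StandardBorelSpace Y]
    (μ : Measure X) [IsProbabilityMeasure μ]
    (T : X → Y) (hT : Measurable T)
    (ν : Measure Y) (hν : ν = μ.map T)
    (κ : Y → Measure X) (hκprob : ∀ y, IsProbabilityMeasure (κ y))
    (hκmeas : ∀ A : Set X, MeasurableSet A → Measurable (fun y => κ y A))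
    (hκdis : ∀ A : Set X, MeasurableSet A → μ A = ∫⁻ y, κ y A ∂ν)
    (hκfib : ∀ᵐ y ∂ν, κ y (T ⁻¹' {y}) = 1) :
    ∀ᵐ x ∂μ, x ∈ measureSupport (κ (T x)) := by
  obtain ⟨b, hbc, -, hb⟩ := TopologicalSpace.exists_countable_basis X
  have key : ∀ U ∈ b, μ (U ∩ T ⁻¹' {y | κ y U = 0}) = 0 := by
    intro U hU
    have hUopen : IsOpen U := hb.isOpen hU
    have hUm : MeasurableSet U := hUopen.measurableSet
    have hCm : MeasurableSet {y | κ y U = 0} :=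
      (hκmeas U hUm) (measurableSet_singleton 0)
    have hBm : MeasurableSet (U ∩ T ⁻¹' {y | κ y U = 0}) := hUm.inter (hT hCm)
    rw [hκdis _ hBm, lintegral_eq_zero_iff (hκmeas _ hBm)]
    filter_upwards [hκfib] with y hy
    by_cases hyC : κ y U = 0
    · exact le_antisymm ((measure_mono inter_subset_left).trans hyC.le) zero_le
    · have := hκprob y
      have h1 : κ y (T ⁻¹' {y})ᶜ = 0 := by
        rw [measure_compl (hT (measurableSet_singleton y)) (measure_ne_top _ _), hy]
        simp
      refine measure_mono_null ?_ h1
      rintro x ⟨hxU, hxC⟩ hxy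
      exact hyC (by simpa [show T x = y from hxy] using hxC)
  have hae : ∀ᵐ x ∂μ, ∀ U ∈ b, ¬ (x ∈ U ∩ T ⁻¹' {y | κ y U = 0}) := by
    rw [ae_ball_iff hbc]
    intro U hU
    rw [ae_iff]
    simpa [Set.inter_def] using key U hU
  filter_upwards [hae] with x hx
  intro V hVopen hxV
  obtain ⟨U, hUb, hxU, hUV⟩ := hb.exists_subset_of_mem_open hxV hVopen
  have h0 : κ (T x) U ≠ 0 := fun h => hx U hUb ⟨hxU, h⟩
  exact lt_of_lt_of_le (pos_iff_ne_zero.mpr h0) (measure_mono hUV)
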